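/- arXiv:2509.21127 — 3 statements merged into one kernel-verified Lean document; each statement's English description precedes it below -/
import Mathlib

section
/- Let A and B be abelian groups equipped with decreasing ℤ-indexed filtrations by subgroups (F^s A)_{s : ℤ} and (F^s B)_{s : ℤ}, and let f : A → B be a group homomorphism with f(F^s A) ⊆ F^s B for all s. Assume: (1) f restricts to a bijection from ⋂_{s : ℤ} F^s A onto ⋂_{s : ℤ} F^s B; (2) the homomorphism ∏_{s : ℤ} F^s A → ∏_{s : ℤ} F^s A sending (a_s)_s to (a_s - a_{s+1})_s (using the inclusions F^{s+1} A ⊆ F^s A) is surjective (i.e. lim¹_s F^s A = 0); (3) for every s, the map F^s A / F^{s+1} A → F^s B / F^{s+1} B induced by f is an isomorphism; (4) both filtrations are exhaustive, i.e. ⋃_{s : ℤ} F^s A = A and ⋃_{s : ℤ} F^s B = B. Then f is an isomorphism of abelian groups, and moreover f(F^s A) = F^s B for every s. -/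
/-- **Boardman, Theorem 2.6.**  Let `A`, `B` be abelian groups with decreasing
`ℤ`-indexed filtrations `FA`, `FB`, and `f : A →+ B` a filtration-preserving map.
If (1) `f` restricts to a bijection between the intersections of the filtrations,
(2) `lim¹ FA = 0` (the map `(a_s)_s ↦ (a_s - a_{s+1})_s` on `∏_s FA s` is surjective),
(3) `f` induces isomorphisms on all associated graded pieces, and
(4) both filtrations are exhaustive,
then `f` is an isomorphism carrying `FA s` onto `FB s` for every `s`. -/
theorem map_of_filtered_abelian_groups_is_iso
    {A B : Type} [AddCommGroup A] [AddCommGroup B]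
    (FA : ℤ → AddSubgroup A) (FB : ℤ → AddSubgroup B)
    (hFA : ∀ s : ℤ, FA (s + 1) ≤ FA s) (hFB : ∀ s : ℤ, FB (s + 1) ≤ FB s)
    (f : A →+ B) (hf : ∀ s : ℤ, ∀ a ∈ FA s, f a ∈ FB s)
    -- (1) `f` restricts to a bijection `⋂ₛ FA s → ⋂ₛ FB s`
    (h1 : Set.BijOn f (⋂ s : ℤ, (FA s : Set A)) (⋂ s : ℤ, (FB s : Set B)))
    -- (2) `lim¹ₛ FA s = 0`
    (h2 : ∀ b : ℤ → A, (∀ s : ℤ, b s ∈ FA s) →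
      ∃ a : ℤ → A, (∀ s : ℤ, a s ∈ FA s) ∧ ∀ s : ℤ, a s - a (s + 1) = b s)
    -- (3) the induced map on associated graded `FA s / FA (s+1) → FB s / FB (s+1)`
    -- is an isomorphism for all `s`
    (h3 : ∀ s : ℤ, Function.Bijective
      (QuotientAddGroup.map ((FA (s + 1)).addSubgroupOf (FA s))
        ((FB (s + 1)).addSubgroupOf (FB s))
        ((f.comp (FA s).subtype).codRestrict (FB s) (fun x => hf s x x.2))
        (fun x hx => AddSubgroup.mem_addSubgroupOf.mpr
          (hf (s + 1) (x : A) (AddSubgroup.mem_addSubgroupOf.mp hx)))))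
    -- (4) both filtrations are exhaustive
    (h4A : ∀ a : A, ∃ s : ℤ, a ∈ FA s) (h4B : ∀ b : B, ∃ s : ℤ, b ∈ FB s) :
    Function.Bijective f ∧ ∀ s : ℤ, (FA s).map f = FB s := by
  classical
  -- monotonicity of the filtrations
  have monoA : ∀ t u : ℤ, t ≤ u → FA u ≤ FA t := by
    intro t u h
    exact Int.le_induction (motive := fun u _ => FA u ≤ FA t) (le_refl _) (fun n _ ih => (hFA n).trans ih) u h
  have monoB : ∀ t u : ℤ, t ≤ u → FB u ≤ FB t := by
    intro t u h
    exact Int.le_induction (motive := fun u _ => FB u ≤ FB t) (le_refl _) (fun n _ ih => (hFB n).trans ih) u h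
  -- graded injectivity, unpacked
  have injstep : ∀ t : ℤ, ∀ a : A, a ∈ FA t → f a ∈ FB (t + 1) → a ∈ FA (t + 1) := by
    intro t a ha hfa
    have h0 : (QuotientAddGroup.map ((FA (t + 1)).addSubgroupOf (FA t))
        ((FB (t + 1)).addSubgroupOf (FB t))
        ((f.comp (FA t).subtype).codRestrict (FB t) (fun x => hf t x x.2))
        (fun x hx => AddSubgroup.mem_addSubgroupOf.mpr
          (hf (t + 1) (x : A) (AddSubgroup.mem_addSubgroupOf.mp hx))))
        (QuotientAddGroup.mk ⟨a, ha⟩) = 0 := by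
      refine (QuotientAddGroup.eq_zero_iff _).2 (AddSubgroup.mem_addSubgroupOf.mpr ?_)
      exact hfa
    have heq := (h3 t).1 (a₁ := QuotientAddGroup.mk ⟨a, ha⟩) (a₂ := 0)
      (by rw [h0, map_zero])
    rw [QuotientAddGroup.eq_zero_iff, AddSubgroup.mem_addSubgroupOf] at heq
    exact heq
  -- graded surjectivity, unpacked
  have step0 : ∀ t : ℤ, ∀ β : B, β ∈ FB t → ∃ α : A, α ∈ FA t ∧ β - f α ∈ FB (t + 1) := by
    intro t β hβ
    obtain ⟨q, hq⟩ := (h3 t).2 (QuotientAddGroup.mk ⟨β, hβ⟩)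
    obtain ⟨α, rfl⟩ := QuotientAddGroup.mk_surjective q
    refine ⟨α, α.2, ?_⟩
    replace hq := (QuotientAddGroup.map_mk _ _ _ _ α).symm.trans hq
    rw [QuotientAddGroup.eq,
      AddSubgroup.mem_addSubgroupOf] at hq
    have : -(f (α : A)) + β ∈ FB (t + 1) := hq
    simpa [sub_eq_neg_add] using this
  -- injectivity
  have inj : Function.Injective f := by
    have ker : ∀ a : A, f a = 0 → a = 0 := by
      intro a ha
      obtain ⟨s₀, hs₀⟩ := h4A a
      have hall : ∀ t : ℤ, a ∈ FA t := by
        intro t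
        rcases le_total t s₀ with h | h
        · exact monoA t s₀ h hs₀
        · exact Int.le_induction (motive := fun t _ => a ∈ FA t) hs₀ (fun n _ ih =>
            injstep n a ih (by rw [ha]; exact (FB (n + 1)).zero_mem)) t h
      have hmem : a ∈ ⋂ t : ℤ, (FA t : Set A) := Set.mem_iInter.2 hall
      have h0mem : (0 : A) ∈ ⋂ t : ℤ, (FA t : Set A) :=
        Set.mem_iInter.2 fun t => (FA t).zero_mem
      exact h1.injOn hmem h0mem (by rw [ha, map_zero])
    intro a₁ a₂ h
    have := ker (a₁ - a₂) (by rw [map_sub, h, sub_self])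
    exact sub_eq_zero.1 this
  -- the key surjectivity lemma
  have key : ∀ s : ℤ, ∀ b ∈ FB s, ∃ a ∈ FA s, f a = b := by
    intro s b hb
    -- totalized choice function for graded surjectivity
    have step1 : ∀ t : ℤ, ∀ β : B, ∃ α : A,
        β ∈ FB t → (α ∈ FA t ∧ β - f α ∈ FB (t + 1)) := by
      intro t β
      by_cases h : β ∈ FB t
      · obtain ⟨α, h1', h2'⟩ := step0 t β h
        exact ⟨α, fun _ => ⟨h1', h2'⟩⟩
      · exact ⟨0, fun hh => absurd hh h⟩
    choose g hg using step1
    -- the sequence of successive remainders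
    obtain ⟨βs, hβ0, hβsucc⟩ : ∃ βs : ℕ → B, βs 0 = b ∧
        ∀ n : ℕ, βs (n + 1) = βs n - f (g (s + n) (βs n)) :=
      ⟨fun n => Nat.rec b (fun n x => x - f (g (s + n) x)) n, rfl, fun n => rfl⟩
    have hβmem : ∀ n : ℕ, βs n ∈ FB (s + n) := by
      intro n
      induction n with
      | zero => simpa [hβ0] using hb
      | succ n ih =>
        have h' := (hg (s + n) (βs n) ih).2
        have e : (s + ((n + 1 : ℕ) : ℤ)) = (s + (n : ℤ)) + 1 := by push_cast; ring
        rw [hβsucc n, e]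
        exact h'
    -- the sequence of increments, re-indexed over ℤ
    obtain ⟨x, hxmem, hxval⟩ : ∃ x : ℤ → A, (∀ u : ℤ, x u ∈ FA u) ∧
        ∀ n : ℕ, x (s + n) = g (s + n) (βs n) := by
      refine ⟨fun u => if h : s ≤ u then g (s + ((u - s).toNat : ℤ)) (βs (u - s).toNat)
        else 0, ?_, ?_⟩
      · intro u
        dsimp only
        split_ifs with h
        · have := (hg (s + ((u - s).toNat : ℤ)) (βs (u - s).toNat)
            (hβmem (u - s).toNat)).1
          convert this using 2
          omega
        · exact (FA u).zero_mem
      · intro n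
        dsimp only
        rw [dif_pos (by omega : s ≤ s + (n : ℤ))]
        have e : ((s + (n : ℤ) - s).toNat : ℕ) = n := by omega
        rw [e]
    -- sum the increments using lim¹ = 0
    obtain ⟨y, hy, hyd⟩ := h2 x hxmem
    have main : ∀ n : ℕ, b - f (y s) + f (y (s + n)) = βs n := by
      intro n
      induction n with
      | zero =>
        rw [hβ0]
        simp only [Nat.cast_zero, add_zero]
        abel
      | succ n ih =>
        have e : (s + ((n + 1 : ℕ) : ℤ)) = (s + (n : ℤ)) + 1 := by push_cast; ring
        have hd := hyd (s + (n : ℤ))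
        rw [hxval n] at hd
        have hfd : f (y (s + (n : ℤ))) - f (y (s + (n : ℤ) + 1)) = f (g (s + (n : ℤ)) (βs n)) := by
          rw [← map_sub, hd]
        rw [e, hβsucc n, ← hfd, ← ih]
        abel
    have hinter : b - f (y s) ∈ ⋂ t : ℤ, (FB t : Set B) := by
      rw [Set.mem_iInter]
      intro t
      have hne : b - f (y s) = βs (t - s).toNat - f (y (s + ((t - s).toNat : ℤ))) :=
        eq_sub_of_add_eq (main (t - s).toNat)
      have hmem : βs (t - s).toNat - f (y (s + ((t - s).toNat : ℤ))) ∈ FB (s + ((t - s).toNat : ℤ)) :=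
        sub_mem (hβmem _) (hf _ _ (hy _))
      exact monoB t (s + ((t - s).toNat : ℤ)) (by omega) (hne ▸ hmem)
    obtain ⟨z, hzmem, hzeq⟩ := h1.surjOn hinter
    refine ⟨y s + z, (FA s).add_mem (hy s) (Set.mem_iInter.1 hzmem s), ?_⟩
    rw [map_add, hzeq]
    abel
  -- conclusion
  refine ⟨⟨inj, ?_⟩, ?_⟩
  · intro b
    obtain ⟨s, hs⟩ := h4B b
    obtain ⟨a, _, ha⟩ := key s b hs
    exact ⟨a, ha⟩
  · intro s
    refine le_antisymm ?_ ?_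
    · rintro _ ⟨a, ha, rfl⟩
      exact hf s a ha
    · intro b hb
      obtain ⟨a, ha, hfa⟩ := key s b hb
      exact ⟨a, ha, hfa⟩
end

section
/- Let (A, E, i, j, ∂) be an unrolled exact couple of bigraded abelian groups. Then for all integers n and s, the kernel of the composite homomorphism A n s → G n → G n / F^{s+1} G n (the structure map κ_s followed by the quotient map) equals the preimage j⁻¹(B_∞^{n,s}) ⊆ A n s. Consequently κ_s and j induce an isomorphism of abelian groups F^s G n / F^{s+1} G n ≅ ker(∂ : E n s → A (n-1) (s+1)) / B_∞^{n,s}; in particular the associated graded of the abutment filtration injects into E_∞^{n,s} := Z_∞^{n,s} / B_∞^{n,s}. -/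
/-- An unrolled exact couple of bigraded abelian groups. -/
structure UnrolledExactCouple where
  A : ℤ → ℤ → AddCommGrpCat
  E : ℤ → ℤ → AddCommGrpCat
  i : ∀ n s : ℤ, A n (s + 1) →+ A n s
  j : ∀ n s : ℤ, A n s →+ E n s
  d : ∀ n s : ℤ, E n s →+ A (n - 1) (s + 1)
  exact_ij : ∀ n s : ℤ, (i n s).range = (j n s).ker
  exact_jd : ∀ n s : ℤ, (j n s).range = (d n s).ker
  exact_di : ∀ n s : ℤ, (d n s).range = (i (n - 1) s).ker

namespace UnrolledExactCouple

variable (C : UnrolledExactCouple)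

/-- Transport along an equality of the filtration index. -/
def cast (n : ℤ) {s t : ℤ} (h : s = t) : C.A n s →+ C.A n t := by
  subst h; exact AddMonoidHom.id _

/-- The `r`-fold composite `i^r : A n (s+r) →+ A n s` of the maps `i`. -/
def ipow (n : ℤ) : ∀ (r : ℕ) (s : ℤ), C.A n (s + (r : ℤ)) →+ C.A n s
  | 0, s => C.cast n (by simp)
  | r + 1, s =>
      ((C.i n s).comp ((ipow n r (s + 1)).comp (C.cast n (by push_cast; ring))))

/-- The transition map `A n t →+ A n s` for `s ≤ t`, a composite of the maps `i`. -/
def tr (n : ℤ) (t s : ℤ) (h : s ≤ t) : C.A n t →+ C.A n s :=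
  (C.ipow n (t - s).toNat s).comp
    (C.cast n (by rw [Int.toNat_of_nonneg (by omega : (0:ℤ) ≤ t - s)]; omega))

/-- The colimit `G n` of the direct system `(A n s)` (s decreasing) along the maps `i`. -/
def G (n : ℤ) : Type :=
  AddCommGroup.DirectLimit (fun s : ℤᵒᵈ => C.A n (OrderDual.ofDual s))
    (fun s t h => C.tr n (OrderDual.ofDual s) (OrderDual.ofDual t) h)

noncomputable instance (n : ℤ) : AddCommGroup (C.G n) := by
  unfold G; infer_instance

/-- The structure map `κ_s : A n s →+ G n`. -/
noncomputable def kappa (n s : ℤ) : C.A n s →+ C.G n :=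
  AddCommGroup.DirectLimit.of (fun s : ℤᵒᵈ => C.A n (OrderDual.ofDual s))
    (fun s t h => C.tr n (OrderDual.ofDual s) (OrderDual.ofDual t) h) (OrderDual.toDual s)

/-- The abutment filtration `F^s G n := im κ_s`. -/
noncomputable def F (n s : ℤ) : AddSubgroup (C.G n) :=
  (C.kappa n s).range

/-- The `r`-cycles `Z_r^{n,s} := ∂⁻¹(im(i^r : A (n-1) (s+1+r) → A (n-1) (s+1)))`. -/
def Z (n s : ℤ) (r : ℕ) : AddSubgroup (C.E n s) :=
  ((C.ipow (n - 1) r (s + 1)).range).comap (C.d n s)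

/-- The `r`-boundaries `B_r^{n,s} := j(ker(i^r : A n s → A n (s-r)))`. -/
def B (n s : ℤ) (r : ℕ) : AddSubgroup (C.E n s) :=
  ((C.tr n s (s - (r : ℤ)) (by omega)).ker).map (C.j n s)

/-- The permanent cycles `Z_∞^{n,s} = ⋂_r Z_r^{n,s}`. -/
def Zinf (n s : ℤ) : AddSubgroup (C.E n s) := ⨅ r : ℕ, C.Z n s r

/-- The infinite boundaries `B_∞^{n,s} = ⋃_r B_r^{n,s}`. -/
def Binf (n s : ℤ) : AddSubgroup (C.E n s) := ⨆ r : ℕ, C.B n s r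

/-- Conditional convergence: for every `n` the limit and `lim¹` of the tower
`(A n s)_s` vanish, i.e. the map `(a_s)_s ↦ (a_s - i(a_{s+1}))_s` is bijective. -/
def ConvergesConditionally : Prop :=
  ∀ n : ℤ, Function.Bijective
    (fun (a : ∀ s : ℤ, C.A n s) => fun s : ℤ => a s - C.i n s (a (s + 1)))

/-- Strong convergence. -/
def ConvergesStrongly : Prop :=
  (∀ n : ℤ,
      (⨅ s : ℤ, C.F n s) = ⊥ ∧
      (∀ b : ℤ → C.G n, (∀ s, b s ∈ C.F n s) →
        ∃ x : ℤ → C.G n, (∀ s, x s ∈ C.F n s) ∧ ∀ s, x s - x (s + 1) = b s)) ∧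
    (∀ n s : ℤ, C.Zinf n s = (C.d n s).ker)
end UnrolledExactCouple

namespace UnrolledExactCouple
variable (C : UnrolledExactCouple)

lemma cast_rfl (n : ℤ) {s : ℤ} (h : s = s) (a : C.A n s) : C.cast n h a = a := rfl

lemma cast_cast (n : ℤ) {s t u : ℤ} (h1 : s = t) (h2 : t = u) (a : C.A n s) :
    C.cast n h2 (C.cast n h1 a) = C.cast n (h1.trans h2) a := by subst h1; subst h2; rfl

lemma ipow_zero' (n s : ℤ) {k : ℕ} (hk : k = 0) (h : s = s + (k:ℤ)) (a : C.A n s) :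
    C.ipow n k s (C.cast n h a) = a := by
  subst hk
  show C.cast n _ (C.cast n _ a) = a
  rw [cast_cast]
  exact C.cast_rfl n _ a

lemma ipow_succ' (n : ℤ) {k r : ℕ} (hk : k = r + 1) {t s : ℤ} (ht : t = s + (k:ℤ))
    (ht' : t = (s+1) + (r:ℤ)) (a : C.A n t) :
    C.ipow n k s (C.cast n ht a) = C.i n s (C.ipow n r (s+1) (C.cast n ht' a)) := by
  subst hk
  show C.i n s (C.ipow n r (s+1) (C.cast n _ (C.cast n _ a))) = _
  rw [cast_cast]

lemma tr_self (n s : ℤ) (h : s ≤ s) (a : C.A n s) : C.tr n s s h a = a :=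
  C.ipow_zero' n s (by omega) _ a

lemma tr_peel (n t s : ℤ) (h : s + 1 ≤ t) (h' : s ≤ t) (a : C.A n t) :
    C.tr n t s h' a = C.i n s (C.tr n t (s + 1) h a) :=
  C.ipow_succ' n (by omega) _ (by rw [Int.toNat_of_nonneg (by omega : (0:ℤ) ≤ t - (s+1))]; omega) a

lemma tr_tr_aux (n : ℤ) : ∀ (k : ℕ) (u t s : ℤ) (h1 : u ≤ t) (h2 : t ≤ s),
    (t - u).toNat = k → ∀ a : C.A n s,
    C.tr n t u h1 (C.tr n s t h2 a) = C.tr n s u (h1.trans h2) a := by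
  intro k
  induction k with
  | zero =>
    intro u t s h1 h2 hk a
    have : u = t := by omega
    subst this
    rw [tr_self]
  | succ k ih =>
    intro u t s h1 h2 hk a
    have h1' : u + 1 ≤ t := by omega
    rw [C.tr_peel n t u h1' h1, ih (u+1) t s h1' h2 (by omega),
      ← C.tr_peel n s u (by omega) (h1.trans h2)]

lemma tr_tr (n u t s : ℤ) (h1 : u ≤ t) (h2 : t ≤ s) (a : C.A n s) :
    C.tr n t u h1 (C.tr n s t h2 a) = C.tr n s u (h1.trans h2) a :=
  C.tr_tr_aux n _ u t s h1 h2 rfl a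

lemma tr_step (n s : ℤ) (h : s ≤ s + 1) (a : C.A n (s+1)) :
    C.tr n (s+1) s h a = C.i n s a := by
  rw [C.tr_peel n (s+1) s le_rfl h, tr_self]

instance (n : ℤ) : DirectedSystem (fun s : ℤᵒᵈ => C.A n (OrderDual.ofDual s))
    (fun s t h => (C.tr n (OrderDual.ofDual s) (OrderDual.ofDual t) h : _ → _)) where
  map_self i x := C.tr_self n _ _ x
  map_map k j i hij hjk x := C.tr_tr n _ _ _ hjk hij x

lemma kappa_tr (n t s : ℤ) (h : t ≤ s) (a : C.A n s) :
    C.kappa n t (C.tr n s t h a) = C.kappa n s a :=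
  AddCommGroup.DirectLimit.of_f (G := fun s : ℤᵒᵈ => C.A n (OrderDual.ofDual s))
    (f := fun s t h => C.tr n (OrderDual.ofDual s) (OrderDual.ofDual t) h)
    (i := OrderDual.toDual s) (j := OrderDual.toDual t) h a

lemma kappa_zero_exact (n s : ℤ) (a : C.A n s) (h : C.kappa n s a = 0) :
    ∃ (t : ℤ) (ht : t ≤ s), C.tr n s t ht a = 0 := by
  obtain ⟨t, ht, h0⟩ := AddCommGroup.DirectLimit.of.zero_exact
    (G := fun s : ℤᵒᵈ => C.A n (OrderDual.ofDual s))
    (f := fun s t h => C.tr n (OrderDual.ofDual s) (OrderDual.ofDual t) h)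
    (OrderDual.toDual s) a h
  exact ⟨OrderDual.ofDual t, ht, h0⟩


lemma tr_congr (n s : ℤ) {t t' : ℤ} (h : t = t') (hts : t ≤ s) (hts' : t' ≤ s) (a : C.A n s) :
    C.cast n h (C.tr n s t hts a) = C.tr n s t' hts' a := by
  subst h; rfl

lemma cast_eq_zero_iff (n : ℤ) {s t : ℤ} (h : s = t) (a : C.A n s) :
    C.cast n h a = 0 ↔ a = 0 := by subst h; rfl

lemma B_mono (n s : ℤ) : Monotone (C.B n s) := by
  apply monotone_nat_of_le_succ
  intro r
  unfold B
  apply AddSubgroup.map_mono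
  intro x hx
  rw [AddMonoidHom.mem_ker] at hx ⊢
  have h1 : s - ((r:ℕ)+1:ℕ) ≤ s - (r:ℤ) := by push_cast; omega
  have h2 : s - (r:ℤ) ≤ s := by omega
  rw [← C.tr_tr n (s - ((r:ℕ)+1:ℕ)) (s - (r:ℤ)) s h1 h2, hx, map_zero]

lemma mem_Binf_iff (n s : ℤ) (x : C.E n s) :
    x ∈ C.Binf n s ↔ ∃ r : ℕ, x ∈ C.B n s r := by
  exact AddSubgroup.mem_iSup_of_directed ((C.B_mono n s).directed_le)

lemma mem_F_iff (n s : ℤ) (a : C.A n s) :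
    C.kappa n s a ∈ C.F n (s+1) ↔ C.j n s a ∈ C.Binf n s := by
  constructor
  · rintro ⟨b, hb⟩
    have hib : C.kappa n s (C.i n s b) = C.kappa n (s+1) b := by
      rw [← C.tr_step n s (by omega) b, C.kappa_tr n s (s+1) (by omega) b]
    have h1 : C.kappa n s (a - C.i n s b) = 0 := by
      rw [map_sub, hib, hb, sub_self]
    obtain ⟨t, ht, h0⟩ := C.kappa_zero_exact n s _ h1
    set r : ℕ := (s - t).toNat with hr
    have htr : t = s - (r : ℤ) := by rw [hr, Int.toNat_of_nonneg (by omega)]; omega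
    have h2 : C.tr n s (s - (r : ℤ)) (by omega) (a - C.i n s b) = 0 := by
      rw [← C.tr_congr n s htr ht (by omega), h0, map_zero]
    have hji : C.j n s (C.i n s b) = 0 := by
      have : C.i n s b ∈ (C.j n s).ker := by
        rw [← C.exact_ij n s]; exact ⟨b, rfl⟩
      rwa [AddMonoidHom.mem_ker] at this
    have hja : C.j n s a = C.j n s (a - C.i n s b) := by
      rw [map_sub, hji, sub_zero]
    rw [(C.mem_Binf_iff n s _)]
    exact ⟨r, ⟨a - C.i n s b, h2, hja.symm⟩⟩
  · intro h
    rw [C.mem_Binf_iff n s] at h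
    obtain ⟨r, x, hx, hjx⟩ := h
    replace hx : C.tr n s (s - (r:ℤ)) (by omega) x = 0 := hx
    have hax : C.j n s (a - x) = 0 := by rw [map_sub, hjx, sub_self]
    have : a - x ∈ (C.i n s).range := by
      rw [C.exact_ij n s, AddMonoidHom.mem_ker]; exact hax
    obtain ⟨b, hb⟩ := this
    have hkx : C.kappa n s x = 0 := by
      rw [← C.kappa_tr n (s - (r:ℤ)) s (by omega) x, hx, map_zero]
    have : C.kappa n s a = C.kappa n (s+1) b := by
      have : a = x + C.i n s b := by rw [hb]; abel
      rw [this, map_add, hkx, zero_add, ← C.tr_step n s (by omega) b,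
        C.kappa_tr n s (s+1) (by omega) b]
    exact ⟨b, this.symm⟩

end UnrolledExactCouple
/-- For an unrolled exact couple, the kernel of the composite
`A n s → G n → G n ⧸ F^{s+1} G n` is exactly `j⁻¹(B_∞^{n,s})`.  Consequently `κ_s` and `j`
induce an isomorphism `F^s G n ⧸ F^{s+1} G n ≅ ker ∂ ⧸ B_∞^{n,s}`, and in particular the
associated graded of the abutment filtration injects into `E_∞^{n,s} = Z_∞^{n,s} ⧸ B_∞^{n,s}`. -/
theorem UnrolledExactCouple.graded_comparison
    (C : UnrolledExactCouple) (n s : ℤ) :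
    -- the kernel of `A n s → G n ⧸ F^{s+1} G n` is `j⁻¹(B_∞^{n,s})`
    ((QuotientAddGroup.mk' (C.F n (s + 1))).comp (C.kappa n s)).ker
        = (C.Binf n s).comap (C.j n s) ∧
    -- `κ_s` and `j` induce an isomorphism `F^s G n ⧸ F^{s+1} G n ≅ ker ∂ ⧸ B_∞^{n,s}`
    (∃ e : (C.F n s ⧸ (C.F n (s + 1)).addSubgroupOf (C.F n s)) ≃+
        ((C.d n s).ker ⧸ (C.Binf n s).addSubgroupOf (C.d n s).ker),
      ∀ a : C.A n s,
        e ((QuotientAddGroup.mk' ((C.F n (s + 1)).addSubgroupOf (C.F n s)))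
            ⟨C.kappa n s a, ⟨a, rfl⟩⟩)
          = (QuotientAddGroup.mk' ((C.Binf n s).addSubgroupOf (C.d n s).ker))
              ⟨C.j n s a, by rw [← C.exact_jd n s]; exact ⟨a, rfl⟩⟩) ∧
    -- in particular, the associated graded injects into `E_∞^{n,s} = Z_∞ ⧸ B_∞`
    (∃ φ : (C.F n s ⧸ (C.F n (s + 1)).addSubgroupOf (C.F n s)) →+
        (C.Zinf n s ⧸ (C.Binf n s).addSubgroupOf (C.Zinf n s)),
      Function.Injective φ ∧
      ∀ a : C.A n s,
        φ ((QuotientAddGroup.mk' ((C.F n (s + 1)).addSubgroupOf (C.F n s)))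
            ⟨C.kappa n s a, ⟨a, rfl⟩⟩)
          = (QuotientAddGroup.mk' ((C.Binf n s).addSubgroupOf (C.Zinf n s)))
              ⟨C.j n s a, AddSubgroup.mem_iInf.mpr fun r =>
                AddSubgroup.mem_comap.mpr (by
                  have : C.j n s a ∈ (C.d n s).ker := by
                    rw [← C.exact_jd n s]; exact ⟨a, rfl⟩
                  rw [AddMonoidHom.mem_ker] at this
                  rw [this]; exact zero_mem _)⟩) := by
  classical
  have hkerd : ∀ a : C.A n s, C.j n s a ∈ (C.d n s).ker := fun a => by
    rw [← C.exact_jd n s]; exact ⟨a, rfl⟩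
  set ψ₁ : C.A n s →+ (C.F n s ⧸ (C.F n (s+1)).addSubgroupOf (C.F n s)) :=
    (QuotientAddGroup.mk' ((C.F n (s+1)).addSubgroupOf (C.F n s))).comp
      ((C.kappa n s).codRestrict (C.F n s) (fun a => ⟨a, rfl⟩)) with hψ₁
  set ψ₂ : C.A n s →+ ((C.d n s).ker ⧸ (C.Binf n s).addSubgroupOf (C.d n s).ker) :=
    (QuotientAddGroup.mk' ((C.Binf n s).addSubgroupOf (C.d n s).ker)).comp
      ((C.j n s).codRestrict (C.d n s).ker hkerd) with hψ₂
  have hs1 : Function.Surjective ψ₁ := by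
    intro x
    obtain ⟨y, rfl⟩ := QuotientAddGroup.mk'_surjective _ x
    obtain ⟨g, a, rfl⟩ := y
    exact ⟨a, rfl⟩
  have hs2 : Function.Surjective ψ₂ := by
    intro x
    obtain ⟨y, rfl⟩ := QuotientAddGroup.mk'_surjective _ x
    obtain ⟨g, hg⟩ := y
    have : g ∈ (C.j n s).range := by rw [C.exact_jd n s]; exact hg
    obtain ⟨a, rfl⟩ := this
    exact ⟨a, rfl⟩
  have hker1 : ψ₁.ker = (C.Binf n s).comap (C.j n s) := by
    ext a
    rw [AddMonoidHom.mem_ker, hψ₁, AddMonoidHom.comp_apply,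
      QuotientAddGroup.mk'_apply, QuotientAddGroup.eq_zero_iff,
      AddSubgroup.mem_addSubgroupOf]
    exact (C.mem_F_iff n s a).trans (AddSubgroup.mem_comap).symm
  have hker2 : ψ₂.ker = (C.Binf n s).comap (C.j n s) := by
    ext a
    rw [AddMonoidHom.mem_ker, hψ₂, AddMonoidHom.comp_apply,
      QuotientAddGroup.mk'_apply, QuotientAddGroup.eq_zero_iff,
      AddSubgroup.mem_addSubgroupOf]
    rfl
  have hker : ψ₁.ker = ψ₂.ker := hker1.trans hker2.symm
  have hfirst : ((QuotientAddGroup.mk' (C.F n (s + 1))).comp (C.kappa n s)).ker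
      = (C.Binf n s).comap (C.j n s) := by
    ext a
    rw [AddMonoidHom.mem_ker, AddMonoidHom.comp_apply, QuotientAddGroup.mk'_apply,
      QuotientAddGroup.eq_zero_iff]
    exact (C.mem_F_iff n s a).trans (AddSubgroup.mem_comap).symm
  refine ⟨hfirst, ?_, ?_⟩
  · -- the isomorphism
    set ek1 := QuotientAddGroup.quotientKerEquivOfSurjective ψ₁ hs1 with hek1
    set ek2 := QuotientAddGroup.quotientKerEquivOfSurjective ψ₂ hs2 with hek2
    refine ⟨ek1.symm.trans ((QuotientAddGroup.quotientAddEquivOfEq hker).trans ek2), ?_⟩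
    intro a
    have h1 : ek1 ((QuotientAddGroup.mk' ψ₁.ker) a) = ψ₁ a :=
      QuotientAddGroup.kerLift_mk ψ₁ a
    have h2 : ek1.symm (ψ₁ a) = (QuotientAddGroup.mk' ψ₁.ker) a := by
      rw [← h1, AddEquiv.symm_apply_apply]
    have h3 : (QuotientAddGroup.mk' ((C.F n (s + 1)).addSubgroupOf (C.F n s)))
        ⟨C.kappa n s a, ⟨a, rfl⟩⟩ = ψ₁ a := rfl
    rw [h3]
    simp only [AddEquiv.trans_apply, h2]
    rw [QuotientAddGroup.mk'_apply, QuotientAddGroup.quotientAddEquivOfEq_mk]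
    exact QuotientAddGroup.kerLift_mk ψ₂ a
  · -- the injection into E∞
    have hKZ : (C.d n s).ker ≤ C.Zinf n s := by
      intro x hx
      rw [AddMonoidHom.mem_ker] at hx
      refine AddSubgroup.mem_iInf.mpr fun r => AddSubgroup.mem_comap.mpr ?_
      rw [hx]; exact zero_mem _
    have hcomap : (C.Binf n s).addSubgroupOf (C.d n s).ker ≤
        ((C.Binf n s).addSubgroupOf (C.Zinf n s)).comap (AddSubgroup.inclusion hKZ) := by
      intro x hx
      rw [AddSubgroup.mem_addSubgroupOf] at hx
      rw [AddSubgroup.mem_comap, AddSubgroup.mem_addSubgroupOf]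
      exact hx
    set q : ((C.d n s).ker ⧸ (C.Binf n s).addSubgroupOf (C.d n s).ker) →+
        (C.Zinf n s ⧸ (C.Binf n s).addSubgroupOf (C.Zinf n s)) :=
      QuotientAddGroup.map _ _ (AddSubgroup.inclusion hKZ) hcomap with hq
    have hqinj : Function.Injective q := by
      rw [injective_iff_map_eq_zero]
      intro z hz
      obtain ⟨x, rfl⟩ := QuotientAddGroup.mk'_surjective _ z
      rw [QuotientAddGroup.mk'_apply] at hz ⊢
      rw [hq, QuotientAddGroup.map_mk, QuotientAddGroup.eq_zero_iff,
        AddSubgroup.mem_addSubgroupOf] at hz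
      rw [QuotientAddGroup.eq_zero_iff, AddSubgroup.mem_addSubgroupOf]
      exact hz
    set ek1 := QuotientAddGroup.quotientKerEquivOfSurjective ψ₁ hs1 with hek1
    set ek2 := QuotientAddGroup.quotientKerEquivOfSurjective ψ₂ hs2 with hek2
    set e := ek1.symm.trans ((QuotientAddGroup.quotientAddEquivOfEq hker).trans ek2) with he
    refine ⟨q.comp e.toAddMonoidHom, hqinj.comp e.injective, ?_⟩
    intro a
    have h1 : ek1 ((QuotientAddGroup.mk' ψ₁.ker) a) = ψ₁ a :=
      QuotientAddGroup.kerLift_mk ψ₁ a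
    have h2 : ek1.symm (ψ₁ a) = (QuotientAddGroup.mk' ψ₁.ker) a := by
      rw [← h1, AddEquiv.symm_apply_apply]
    have h3 : (QuotientAddGroup.mk' ((C.F n (s + 1)).addSubgroupOf (C.F n s)))
        ⟨C.kappa n s a, ⟨a, rfl⟩⟩ = ψ₁ a := rfl
    have h4 : e (ψ₁ a) = ψ₂ a := by
      rw [he]
      simp only [AddEquiv.trans_apply, h2]
      rw [QuotientAddGroup.mk'_apply, QuotientAddGroup.quotientAddEquivOfEq_mk]
      exact QuotientAddGroup.kerLift_mk ψ₂ a
    rw [AddMonoidHom.comp_apply, AddEquiv.coe_toAddMonoidHom, h3, h4]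
    rw [hψ₂, AddMonoidHom.comp_apply, QuotientAddGroup.mk'_apply, hq,
      QuotientAddGroup.map_mk]
    congr 1
end

section
/- Let (A, E, i, j, ∂) be an unrolled exact couple of bigraded abelian groups. Suppose that for every integer n there exists an integer s(n) such that A n s = 0 for all s ≥ s(n) (the bound being allowed to depend on n). Then the couple converges conditionally and converges strongly; in particular Z_∞^{n,s} = ker(∂ : E n s → A (n-1) (s+1)) for all n, s. -/
/-- Generic telescope construction: if `b s` vanishes for `s ≥ s₀`, then the telescope
equation `a s - φ s (a (s+1)) = b s` has a solution, compatible with a family of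
subgroups. -/
private lemma exists_telescope {T : ℤ → Type} [∀ s, AddCommGroup (T s)]
    (φ : ∀ s : ℤ, T (s + 1) →+ T s) (S : ∀ s, AddSubgroup (T s))
    (hφ : ∀ s x, x ∈ S (s + 1) → φ s x ∈ S s)
    (b : ∀ s, T s) (hbS : ∀ s, b s ∈ S s) (s₀ : ℤ) (hb : ∀ s, s₀ ≤ s → b s = 0) :
    ∃ a : ∀ s, T s, (∀ s, a s ∈ S s) ∧ ∀ s, a s - φ s (a (s + 1)) = b s := by
  let f : ℕ → ∀ s : ℤ, T s := fun k =>
    Nat.rec (motive := fun _ => ∀ s : ℤ, T s) (fun _ => 0)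
      (fun _ fk s => b s + φ s (fk (s + 1))) k
  have hfsucc : ∀ (k : ℕ) (s : ℤ), f (k + 1) s = b s + φ s (f k (s + 1)) := fun _ _ => rfl
  have hstab : ∀ (k : ℕ) (s : ℤ), s₀ ≤ s + k → f (k + 1) s = f k s := by
    intro k
    induction k with
    | zero =>
      intro s hs
      rw [hfsucc]
      show b s + φ s 0 = (0 : T s)
      rw [map_zero, add_zero, hb s (by push_cast at hs; omega)]
    | succ k ih =>
      intro s hs
      rw [hfsucc (k + 1) s, hfsucc k s, ih (s + 1) (by push_cast at hs ⊢; omega)]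
  have hstab' : ∀ (k d : ℕ) (s : ℤ), s₀ ≤ s + k → f (k + d) s = f k s := by
    intro k d s hk
    induction d with
    | zero => rfl
    | succ d ih =>
      have : k + (d + 1) = (k + d) + 1 := by ring
      rw [this, hstab (k + d) s (by push_cast at hk ⊢; omega), ih]
  have hstab2 : ∀ (k m : ℕ) (s : ℤ), s₀ ≤ s + k → s₀ ≤ s + m → f k s = f m s := by
    intro k m s hk hm
    rcases le_total k m with hkm | hkm
    · obtain ⟨d, rfl⟩ := Nat.exists_eq_add_of_le hkm
      exact (hstab' k d s hk).symm
    · obtain ⟨d, rfl⟩ := Nat.exists_eq_add_of_le hkm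
      exact hstab' m d s hm
  have hmem : ∀ (k : ℕ) (s : ℤ), f k s ∈ S s := by
    intro k
    induction k with
    | zero => intro s; exact (S s).zero_mem
    | succ k ih => intro s; rw [hfsucc]; exact (S s).add_mem (hbS s) (hφ s _ (ih (s + 1)))
  refine ⟨fun s => f ((s₀ - s).toNat + 1) s, fun s => ?_, fun s => ?_⟩
  · exact hmem ((s₀ - s).toNat + 1) s
  have h1 : f ((s₀ - s).toNat + 1) s = b s + φ s (f (s₀ - s).toNat (s + 1)) := hfsucc _ _
  have h2 : f (s₀ - s).toNat (s + 1) = f ((s₀ - (s + 1)).toNat + 1) (s + 1) := by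
    exact hstab2 (s₀ - s).toNat ((s₀ - (s + 1)).toNat + 1) (s + 1)
      (by have := Int.self_le_toNat (s₀ - s); omega)
      (by have := Int.self_le_toNat (s₀ - (s + 1)); push_cast; omega)
  show f ((s₀ - s).toNat + 1) s - φ s (f ((s₀ - (s + 1)).toNat + 1) (s + 1)) = b s
  rw [h1, ← h2]; abel

/-- If `a s = φ s (a (s+1))` for all `s` and the groups are eventually trivial, `a = 0`. -/
private lemma telescope_zero {T : ℤ → Type} [∀ s, AddCommGroup (T s)]
    (φ : ∀ s : ℤ, T (s + 1) →+ T s) (s₀ : ℤ) (htriv : ∀ s, s₀ ≤ s → ∀ x : T s, x = 0)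
    (a : ∀ s, T s) (ha : ∀ s, a s - φ s (a (s + 1)) = 0) : ∀ s, a s = 0 := by
  have key : ∀ (k : ℕ) (s : ℤ), s₀ ≤ s + k → a s = 0 := by
    intro k
    induction k with
    | zero => intro s hs; exact htriv s (by push_cast at hs; omega) _
    | succ k ih =>
      intro s hs
      have h1 : a s = φ s (a (s + 1)) := by
        have := ha s; rwa [sub_eq_zero] at this
      rw [h1, ih (s + 1) (by push_cast at hs ⊢; omega), map_zero]
  intro s
  exact key (s₀ - s).toNat s (by have := Int.self_le_toNat (s₀ - s); omega)


/-- If for every `n` the groups `A n s` vanish for all sufficiently large `s` (the bound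
being allowed to depend on `n`), then the exact couple converges conditionally and
strongly; in particular `Z_∞^{n,s} = ker ∂` for all `n, s`. -/
theorem UnrolledExactCouple.eventually_zero_implies_strong_convergence
    (C : UnrolledExactCouple)
    (h : ∀ n : ℤ, ∃ s₀ : ℤ, ∀ s : ℤ, s₀ ≤ s → ∀ a : C.A n s, a = 0) :
    C.ConvergesConditionally ∧ C.ConvergesStrongly ∧
      ∀ n s : ℤ, C.Zinf n s = (C.d n s).ker := by
  obtain ⟨hcond, hF, hZ⟩ : C.ConvergesConditionally ∧
      (∀ n : ℤ,
        (⨅ s : ℤ, C.F n s) = ⊥ ∧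
        (∀ b : ℤ → C.G n, (∀ s, b s ∈ C.F n s) →
          ∃ x : ℤ → C.G n, (∀ s, x s ∈ C.F n s) ∧ ∀ s, x s - x (s + 1) = b s)) ∧
      (∀ n s : ℤ, C.Zinf n s = (C.d n s).ker) := by
    refine ⟨?_, ?_, ?_⟩
    · -- conditional convergence
      intro n
      obtain ⟨s₀, hs₀⟩ := h n
      constructor
      · intro a₁ a₂ heq
        funext s
        have key := telescope_zero (T := fun s => C.A n s) (C.i n) s₀ hs₀
          (fun s => a₁ s - a₂ s) ?_
        · exact sub_eq_zero.mp (key s)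
        · intro t
          have h1 : a₁ t - C.i n t (a₁ (t + 1)) = a₂ t - C.i n t (a₂ (t + 1)) :=
            congrFun heq t
          calc (a₁ t - a₂ t) - C.i n t (a₁ (t + 1) - a₂ (t + 1))
              = (a₁ t - C.i n t (a₁ (t + 1))) - (a₂ t - C.i n t (a₂ (t + 1))) := by
                rw [map_sub]; abel
            _ = 0 := by rw [h1, sub_self]
      · intro b
        obtain ⟨a, _, ha⟩ := exists_telescope (T := fun s => C.A n s) (C.i n)
          (fun _ => ⊤) (fun _ _ _ => AddSubgroup.mem_top _) b
          (fun _ => AddSubgroup.mem_top _) s₀ (fun s hs => hs₀ s hs _)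
        exact ⟨a, funext ha⟩
    · -- the filtration conditions
      intro n
      obtain ⟨s₀, hs₀⟩ := h n
      have hFbot : ∀ s : ℤ, s₀ ≤ s → C.F n s = ⊥ := by
        intro s hs
        rw [AddSubgroup.eq_bot_iff_forall]
        rintro x ⟨a, rfl⟩
        rw [hs₀ s hs a, map_zero]
      have hFmono : ∀ s : ℤ, ∀ x ∈ C.F n (s + 1), x ∈ C.F n s := by
        rintro s x ⟨a, rfl⟩
        refine ⟨C.tr n (s + 1) s (by omega) a, ?_⟩
        exact AddCommGroup.DirectLimit.of_f
          (G := fun t : ℤᵒᵈ => C.A n (OrderDual.ofDual t))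
          (f := fun t u h => C.tr n (OrderDual.ofDual t) (OrderDual.ofDual u) h)
          (i := OrderDual.toDual (s + 1)) (j := OrderDual.toDual s)
          (OrderDual.toDual_le_toDual.mpr (by omega)) a
      constructor
      · refine le_antisymm (le_trans (iInf_le _ s₀) ?_) bot_le
        exact (hFbot s₀ le_rfl).le
      · intro b hb
        have hb0 : ∀ s : ℤ, s₀ ≤ s → b s = 0 := by
          intro s hs
          have := hb s
          rw [hFbot s hs, AddSubgroup.mem_bot] at this
          exact this
        obtain ⟨x, hx1, hx2⟩ := exists_telescope (T := fun _ => C.G n)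
          (fun _ => AddMonoidHom.id _) (fun s => C.F n s)
          (fun s y hy => hFmono s y hy) b hb s₀ hb0
        exact ⟨x, hx1, fun s => hx2 s⟩
    · -- permanent cycles equal the kernel of the differential
      intro n s
      obtain ⟨s₀, hs₀⟩ := h (n - 1)
      apply le_antisymm
      · refine le_trans (iInf_le _ (s₀ - (s + 1)).toNat) ?_
        intro x hx
        obtain ⟨a, ha⟩ := hx
        have ha0 : a = 0 := by
          refine hs₀ _ ?_ a
          have := Int.self_le_toNat (s₀ - (s + 1)); omega
        rw [AddMonoidHom.mem_ker, ← ha, ha0, map_zero]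
      · intro x hx
        rw [AddMonoidHom.mem_ker] at hx
        refine AddSubgroup.mem_iInf.mpr fun r => ?_
        rw [Z, AddSubgroup.mem_comap, hx]
        exact zero_mem _
  exact ⟨hcond, ⟨hF, hZ⟩, hZ⟩
end
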